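/- (Maximal entanglement via interaction with a local environment only) Let Z be the Pauli matrix Z = |0⟩⟨0| − |1⟩⟨1| on ℂ² and define M = Z ⊗ I ⊗ Z on ℂ² ⊗ ℂ² ⊗ ℂ² (coupling only the first qubit A and the third qubit C). Let |±⟩ = (e₀ ± e₁)/√2, ψ_m = (|+⟩⊗|−⟩ + |−⟩⊗|+⟩)/√2, ψ̃_m = (|−⟩⊗|−⟩ + |+⟩⊗|+⟩)/√2, and ρ(0) = (1/2)|ψ_m⟩⟨ψ_m| ⊗ |0⟩⟨0| + (1/2)|ψ̃_m⟩⟨ψ̃_m| ⊗ |1⟩⟨1|. Then the reduced state ρ_{AB}(π/4) = tr_C( exp(−i(π/4)M) ρ(0) exp(i(π/4)M) ) is pure (tr ρ_{AB}(π/4)² = 1), has negativity 1/2 with respect to the bipartition A : B, and both of its single-qubit marginals equal I/2; that is, the two principal qubits become maximally entangled even though qubit B is never operated on. -/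

import Mathlib

open scoped Matrix Kronecker ComplexOrder

noncomputable section

/-- Hermitian inner product on `n → ℂ` (conjugate-linear in the first argument). -/
def cinner {n : Type*} [Fintype n] (v w : n → ℂ) : ℂ :=
  ∑ i, (starRingEnd ℂ) (v i) * w i

/-- Tensor (Kronecker) product of vectors. -/
def tensorVec {α β : Type*} (v : α → ℂ) (w : β → ℂ) : α × β → ℂ :=
  fun p => v p.1 * w p.2

/-- The projector `|v⟩⟨v|`. -/
def vecProj {n : Type*} (v : n → ℂ) : Matrix n n ℂ :=
  Matrix.of fun i j => v i * (starRingEnd ℂ) (v j)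

/-- A density matrix: positive semidefinite with unit trace. -/
def IsDensityMatrix {n : Type*} [Fintype n] (ρ : Matrix n n ℂ) : Prop :=
  ρ.PosSemidef ∧ ρ.trace = 1

open Classical in
/-- Positive semidefinite square root (0 on non-PSD input). -/
def msqrt {n : Type*} [Fintype n] [DecidableEq n] (ρ : Matrix n n ℂ) : Matrix n n ℂ :=
  if h : ρ.PosSemidef then
    (h.1.eigenvectorUnitary : Matrix n n ℂ) *
      Matrix.diagonal ((↑) ∘ (Real.sqrt ·) ∘ h.1.eigenvalues) *
      (star h.1.eigenvectorUnitary : Matrix n n ℂ)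
  else 0

/-- Uhlmann root fidelity `F(ρ,σ) = tr √(√ρ σ √ρ)`. -/
def rootFidelity {n : Type*} [Fintype n] [DecidableEq n] (ρ σ : Matrix n n ℂ) : ℝ :=
  ((msqrt (msqrt ρ * σ * msqrt ρ)).trace).re

/-- Partial trace over the second tensor factor. -/
def ptraceC {α γ : Type*} [Fintype γ] (ρ : Matrix (α × γ) (α × γ) ℂ) : Matrix α α ℂ :=
  Matrix.of fun i j => ∑ k, ρ (i, k) (j, k)

/-- Partial trace over the first tensor factor. -/
def ptraceA {α β : Type*} [Fintype α] (ρ : Matrix (α × β) (α × β) ℂ) : Matrix β β ℂ :=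
  Matrix.of fun i j => ∑ k, ρ (k, i) (k, j)

/-- Partial transpose on the second tensor factor. -/
def ptB {α β : Type*} (ρ : Matrix (α × β) (α × β) ℂ) : Matrix (α × β) (α × β) ℂ :=
  Matrix.of fun p q => ρ (p.1, q.2) (q.1, p.2)

open Classical in
/-- Negativity: the sum of the absolute values of the negative eigenvalues of
the partial transpose (0 if the partial transpose is not Hermitian). -/
def negativity {α β : Type*} [Fintype α] [Fintype β] [DecidableEq α] [DecidableEq β]
    (ρ : Matrix (α × β) (α × β) ℂ) : ℝ :=
  if h : (ptB ρ).IsHermitian then ∑ i, max 0 (- h.eigenvalues i) else 0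

/-- A family of vectors is an orthonormal basis family (orthonormal, indexed by the
same finite type as the dimension, hence a basis). -/
def IsONB {n : Type*} [Fintype n] [DecidableEq n] (x : n → n → ℂ) : Prop :=
  ∀ j k, cinner (x j) (x k) = if j = k then 1 else 0

/-- Separability: a finite convex combination of projectors onto product unit vectors. -/
def IsSeparableDM {α β : Type*} [Fintype α] [Fintype β]
    (ρ : Matrix (α × β) (α × β) ℂ) : Prop :=
  ∃ (m : ℕ) (p : Fin m → ℝ) (a : Fin m → α → ℂ) (b : Fin m → β → ℂ),
    (∀ j, 0 ≤ p j) ∧ (∑ j, p j = 1) ∧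
    (∀ j, cinner (a j) (a j) = 1) ∧ (∀ j, cinner (b j) (b j) = 1) ∧
    ρ = ∑ j, (p j : ℂ) • vecProj (tensorVec (a j) (b j))

/-- A maximally entangled state on `ℂ^d ⊗ ℂ^d`. -/
def IsMaxEnt {d : ℕ} (Ψ : Fin d × Fin d → ℂ) : Prop :=
  ∃ x y : Fin d → Fin d → ℂ, IsONB x ∧ IsONB y ∧
    Ψ = ((Real.sqrt d : ℂ)⁻¹) • ∑ j, tensorVec (x j) (y j)

/-- Standard basis vector `e₀` of `ℂ²`. -/
def qe0 : Fin 2 → ℂ := ![1, 0]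

/-- Standard basis vector `e₁` of `ℂ²`. -/
def qe1 : Fin 2 → ℂ := ![0, 1]

/-- Pauli `X` matrix. -/
def pX : Matrix (Fin 2) (Fin 2) ℂ := !![0, 1; 1, 0]

/-- Pauli `Y` matrix. -/
def pY : Matrix (Fin 2) (Fin 2) ℂ := !![0, -Complex.I; Complex.I, 0]

/-- Pauli `Z` matrix. -/
def pZ : Matrix (Fin 2) (Fin 2) ℂ := !![1, 0; 0, -1]

/-- `|+⟩ = (e₀ + e₁)/√2`. -/
def qplus : Fin 2 → ℂ := (((Real.sqrt 2 : ℝ) : ℂ))⁻¹ • (qe0 + qe1)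

/-- `|−⟩ = (e₀ − e₁)/√2`. -/
def qminus : Fin 2 → ℂ := (((Real.sqrt 2 : ℝ) : ℂ))⁻¹ • (qe0 - qe1)

/-- `ψ_m = (|+−⟩ + |−+⟩)/√2`. -/
def ψm : Fin 2 × Fin 2 → ℂ :=
  (((Real.sqrt 2 : ℝ) : ℂ))⁻¹ • (tensorVec qplus qminus + tensorVec qminus qplus)

/-- `ψ̃_m = (|−−⟩ + |++⟩)/√2`. -/
def ψtm : Fin 2 × Fin 2 → ℂ :=
  (((Real.sqrt 2 : ℝ) : ℂ))⁻¹ • (tensorVec qminus qminus + tensorVec qplus qplus)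

/-- The classically correlated initial state
`ρ(0) = ½|ψ_m⟩⟨ψ_m| ⊗ |0⟩⟨0| + ½|ψ̃_m⟩⟨ψ̃_m| ⊗ |1⟩⟨1|`. -/
def ρcls : Matrix ((Fin 2 × Fin 2) × Fin 2) ((Fin 2 × Fin 2) × Fin 2) ℂ :=
  (2⁻¹ : ℂ) • (vecProj ψm ⊗ₖ vecProj qe0) + (2⁻¹ : ℂ) • (vecProj ψtm ⊗ₖ vecProj qe1)

/-- The Hamiltonian `M = Z ⊗ I ⊗ Z`, coupling only qubit `A` to its local
environment `C`. -/
def Mloc : Matrix ((Fin 2 × Fin 2) × Fin 2) ((Fin 2 × Fin 2) × Fin 2) ℂ :=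
  (pZ ⊗ₖ (1 : Matrix (Fin 2) (Fin 2) ℂ)) ⊗ₖ pZ

/-- The reduced state of `AB` at time `π/4`. -/
def ρABloc : Matrix (Fin 2 × Fin 2) (Fin 2 × Fin 2) ℂ :=
  ptraceC (NormedSpace.exp ((-(Complex.I * ((Real.pi / 4 : ℝ) : ℂ))) • Mloc) * ρcls *
    NormedSpace.exp ((Complex.I * ((Real.pi / 4 : ℝ) : ℂ)) • Mloc))


namespace LocalEnvAux

open Matrix Complex

/-- Sign function for qubit basis. -/
def χ : Fin 2 → ℂ := ![1, -1]

/-- Diagonal of `Mloc`. -/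
def μd : (Fin 2 × Fin 2) × Fin 2 → ℂ := fun p => χ p.1.1 * χ p.2

noncomputable def T : ℂ := ((Real.pi / 4 : ℝ) : ℂ)

lemma pZ_diag : pZ = Matrix.diagonal χ := by
  ext a b
  fin_cases a <;> fin_cases b <;> simp [pZ, χ, Matrix.diagonal]

lemma Mloc_diag : Mloc = Matrix.diagonal μd := by
  rw [Mloc, pZ_diag, show (1 : Matrix (Fin 2) (Fin 2) ℂ) = Matrix.diagonal (fun _ => (1:ℂ)) by
    simp [Matrix.diagonal_one],
    Matrix.diagonal_kronecker_diagonal, Matrix.diagonal_kronecker_diagonal]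
  simp [μd]

lemma exp_smul_Mloc (z : ℂ) :
    NormedSpace.exp (z • Mloc) = Matrix.diagonal (fun p => Complex.exp (z * μd p)) := by
  rw [Mloc_diag, ← Matrix.diagonal_smul, Matrix.exp_diagonal]
  congr 1
  funext p
  rw [Pi.exp_def, ← Complex.exp_eq_exp_ℂ]
  rfl

noncomputable def s : ℂ := ((Real.sqrt 2 : ℝ) : ℂ)

lemma s_sq : s ^ 2 = 2 := by
  rw [s, ← Complex.ofReal_pow, Real.sq_sqrt (by norm_num : (0:ℝ) ≤ 2)]
  norm_num

lemma s_ne : s ≠ 0 := by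
  intro h
  have := s_sq
  rw [h] at this
  norm_num at this

lemma s_inv_sq : s⁻¹ ^ 2 = 2⁻¹ := by rw [inv_pow, s_sq]

lemma s_inv_cube : s⁻¹ ^ 3 = 2⁻¹ * s⁻¹ := by
  rw [pow_succ, s_inv_sq]

lemma s_inv_mul : s⁻¹ * s⁻¹ = 2⁻¹ := by
  rw [← sq, s_inv_sq]

lemma conj_s : (starRingEnd ℂ) s = s := by rw [s, Complex.conj_ofReal]

lemma conj_s_inv : (starRingEnd ℂ) s⁻¹ = s⁻¹ := by
  rw [map_inv₀, s, Complex.conj_ofReal]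

lemma ψm_eval : ∀ p : Fin 2 × Fin 2,
    ψm p = s⁻¹ * (if p = (0,0) then 1 else if p = (1,1) then -1 else 0) := by
  rintro ⟨a, b⟩
  fin_cases a <;> fin_cases b <;>
    simp [ψm, tensorVec, qplus, qminus, qe0, qe1, s] <;>
    rw [show ((Real.sqrt 2 : ℝ) : ℂ) = s from rfl] <;>
    field_simp [s_ne] <;>
    first
      | linear_combination s_sq
      | linear_combination (-1 : ℂ) * s_sq
      | linear_combination (2 : ℂ) * s_sq
      | linear_combination (-2 : ℂ) * s_sq
      | linear_combination s * s_sq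
      | linear_combination (-s) * s_sq
      | linear_combination s⁻¹ * s_sq
      | linear_combination (-s⁻¹) * s_sq
      | ring

lemma ψtm_eval : ∀ p : Fin 2 × Fin 2,
    ψtm p = s⁻¹ * (if p = (0,0) then 1 else if p = (1,1) then 1 else 0) := by
  rintro ⟨a, b⟩
  fin_cases a <;> fin_cases b <;>
    simp [ψtm, tensorVec, qplus, qminus, qe0, qe1, s] <;>
    rw [show ((Real.sqrt 2 : ℝ) : ℂ) = s from rfl] <;>
    field_simp [s_ne] <;>
    first
      | linear_combination s_sq
      | linear_combination (-1 : ℂ) * s_sq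
      | linear_combination (2 : ℂ) * s_sq
      | linear_combination (-2 : ℂ) * s_sq
      | linear_combination s * s_sq
      | linear_combination (-s) * s_sq
      | linear_combination s⁻¹ * s_sq
      | linear_combination (-s⁻¹) * s_sq
      | ring

lemma expI2 : Complex.exp (Complex.I * T * 2) = Complex.I := by
  have h : Complex.I * T * 2 = ((Real.pi / 2 : ℝ) : ℂ) * Complex.I := by
    rw [T]; push_cast; ring
  rw [h, Complex.exp_mul_I, ← Complex.ofReal_cos, ← Complex.ofReal_sin,
    Real.cos_pi_div_two, Real.sin_pi_div_two]
  simp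

lemma expI2' : Complex.exp (-(Complex.I * T * 2)) = -Complex.I := by
  rw [Complex.exp_neg, expI2, Complex.inv_I]

lemma phase_eval (a c k : Fin 2) :
    Complex.exp (Complex.I * T * (χ c * χ k - χ a * χ k)) =
      if a = c then 1 else if a = k then -Complex.I else Complex.I := by
  fin_cases a <;> fin_cases c <;> fin_cases k <;>
    simp only [χ, Matrix.cons_val_zero, Matrix.cons_val_one, Matrix.head_cons] <;>
    norm_num <;>
    first
      | exact expI2
      | exact expI2'

/-- The vector `(|00⟩ - i|11⟩)` (unnormalized). -/
def gv : Fin 2 × Fin 2 → ℂ := fun p => if p = (0,0) then 1 else if p = (1,1) then -Complex.I else 0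

/-- The explicit reduced state. -/
noncomputable def RAB : Matrix (Fin 2 × Fin 2) (Fin 2 × Fin 2) ℂ :=
  Matrix.of fun p q => 2⁻¹ * gv p * (starRingEnd ℂ) (gv q)

lemma evolved_entry (p q : (Fin 2 × Fin 2) × Fin 2) :
    (NormedSpace.exp ((-(Complex.I * ((Real.pi / 4 : ℝ) : ℂ))) • Mloc) * ρcls *
      NormedSpace.exp ((Complex.I * ((Real.pi / 4 : ℝ) : ℂ)) • Mloc)) p q =
    Complex.exp (Complex.I * T * (μd q - μd p)) * ρcls p q := by
  rw [exp_smul_Mloc, exp_smul_Mloc]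
  rw [Matrix.mul_diagonal, Matrix.diagonal_mul, mul_right_comm, ← Complex.exp_add]
  congr 1
  rw [T]
  ring

lemma rhoAB_eq : ρABloc = RAB := by
  ext p q
  obtain ⟨a, b⟩ := p
  obtain ⟨c, d⟩ := q
  rw [ρABloc, ptraceC]
  simp only [Matrix.of_apply, Fin.sum_univ_two, evolved_entry]
  dsimp only [μd]
  rw [phase_eval, phase_eval]
  fin_cases a <;> fin_cases c <;> fin_cases b <;> fin_cases d <;>
    simp [ρcls, vecProj, Matrix.kroneckerMap_apply, ψm_eval, ψtm_eval, qe0, qe1,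
      RAB, gv, _root_.map_mul, conj_s, conj_s_inv, s_inv_mul, Complex.I_mul_I, Prod.ext_iff] <;>
    try (norm_num [s_inv_mul, Complex.I_mul_I, Complex.I_sq]) <;>
    try ring <;>
    try (rw [Complex.I_sq]; norm_num)

end LocalEnvAux


namespace LocalEnvAux

lemma ptB_RAB_herm : (ptB RAB).IsHermitian := by
  rw [Matrix.IsHermitian]
  ext p q
  obtain ⟨a, b⟩ := p
  obtain ⟨c, d⟩ := q
  fin_cases a <;> fin_cases b <;> fin_cases c <;> fin_cases d <;>
    simp [Matrix.conjTranspose_apply, ptB, RAB, gv, Prod.ext_iff]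

lemma ptB_RAB_sq : ptB RAB * ptB RAB = (4⁻¹ : ℂ) • (1 : Matrix (Fin 2 × Fin 2) (Fin 2 × Fin 2) ℂ) := by
  ext p q
  obtain ⟨a, b⟩ := p
  obtain ⟨c, d⟩ := q
  fin_cases a <;> fin_cases b <;> fin_cases c <;> fin_cases d <;>
    simp [Matrix.mul_apply, Fintype.sum_prod_type, Fin.sum_univ_two, ptB, RAB, gv,
      Matrix.one_apply, Prod.ext_iff] <;>
    try norm_num [Complex.I_mul_I] <;>
    try (ring_nf; norm_num [Complex.I_sq, pow_succ])

lemma ptB_RAB_trace : (ptB RAB).trace = 1 := by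
  simp [Matrix.trace, Matrix.diag, Fintype.sum_prod_type, Fin.sum_univ_two, ptB, RAB, gv,
    Prod.ext_iff]
  norm_num [Complex.I_mul_I]
  ring_nf
  norm_num [Complex.I_sq]

lemma eig_pm (i : Fin 2 × Fin 2) :
    ptB_RAB_herm.eigenvalues i = 1/2 ∨ ptB_RAB_herm.eigenvalues i = -(1/2) := by
  set hH := ptB_RAB_herm
  set lam := hH.eigenvalues i with hlam
  have hv := hH.mulVec_eigenvectorBasis i
  have hvne : (⇑(hH.eigenvectorBasis i) : (Fin 2 × Fin 2) → ℂ) ≠ 0 := by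
    intro h0
    apply hH.eigenvectorBasis.orthonormal.ne_zero i
    ext j
    exact congrFun h0 j
  obtain ⟨j, hj⟩ := Function.ne_iff.mp hvne
  have h2 : (ptB RAB) *ᵥ ((ptB RAB) *ᵥ ⇑(hH.eigenvectorBasis i)) =
      lam • lam • ⇑(hH.eigenvectorBasis i) := by
    rw [hv, Matrix.mulVec_smul, hv]
  have h3 : (ptB RAB) *ᵥ ((ptB RAB) *ᵥ ⇑(hH.eigenvectorBasis i)) =
      (4⁻¹ : ℂ) • ⇑(hH.eigenvectorBasis i) := by
    rw [Matrix.mulVec_mulVec, ptB_RAB_sq, Matrix.smul_mulVec, Matrix.one_mulVec]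
  simp only [Pi.zero_apply] at hj
  have h4 := congrFun (h2.symm.trans h3) j
  simp only [Pi.smul_apply, Complex.real_smul, smul_eq_mul] at h4
  rw [← mul_assoc] at h4
  have h6 : (lam : ℂ) * (lam : ℂ) = 4⁻¹ := mul_right_cancel₀ hj h4
  have h7 : lam * lam = 4⁻¹ := by
    have : ((lam * lam : ℝ) : ℂ) = ((4⁻¹ : ℝ) : ℂ) := by
      push_cast
      linear_combination h6
    exact_mod_cast this
  have h8 : (lam - 1/2) * (lam + 1/2) = 0 := by linear_combination h7
  rcases mul_eq_zero.mp h8 with h | h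
  · left; linarith
  · right; linarith

lemma eig_sum : ∑ i, ptB_RAB_herm.eigenvalues i = 1 := by
  have hU1 : star (ptB_RAB_herm.eigenvectorUnitary : Matrix (Fin 2 × Fin 2) (Fin 2 × Fin 2) ℂ) *
      (ptB_RAB_herm.eigenvectorUnitary : Matrix (Fin 2 × Fin 2) (Fin 2 × Fin 2) ℂ) = 1 :=
    (Matrix.mem_unitaryGroup_iff').mp (ptB_RAB_herm.eigenvectorUnitary).2
  have htr : (ptB RAB).trace = ∑ i, ((ptB_RAB_herm.eigenvalues i : ℝ) : ℂ) := by
    conv_lhs => rw [ptB_RAB_herm.spectral_theorem]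
    rw [Unitary.conjStarAlgAut_apply, Matrix.trace_mul_cycle, hU1, one_mul, Matrix.trace_diagonal]
    simp [Function.comp]
  rw [ptB_RAB_trace] at htr
  have : ((∑ i, ptB_RAB_herm.eigenvalues i : ℝ) : ℂ) = ((1 : ℝ) : ℂ) := by
    push_cast
    rw [← htr]
  exact_mod_cast this

lemma negativity_RAB : negativity RAB = 1 / 2 := by
  rw [negativity, dif_pos ptB_RAB_herm]
  have h1 : ∀ i : Fin 2 × Fin 2, max 0 (-(ptB_RAB_herm.eigenvalues i)) =
      (1/2 - ptB_RAB_herm.eigenvalues i)/2 := by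
    intro i
    rcases eig_pm i with h | h <;> rw [h] <;> norm_num
  rw [Finset.sum_congr rfl (fun i _ => h1 i), ← Finset.sum_div, Finset.sum_sub_distrib, eig_sum]
  simp
  norm_num

end LocalEnvAux

/-- maximal entanglement via interaction with a local environment only:
the reduced state at `t = π/4` is pure, maximally entangled (negativity `1/2`), and
has both single-qubit marginals equal to `I/2`, although qubit `B` was never operated
on. -/
theorem local_environment_entangles :
    (ρABloc * ρABloc).trace = 1 ∧
    negativity ρABloc = 1 / 2 ∧
    ptraceC ρABloc = (2⁻¹ : ℂ) • (1 : Matrix (Fin 2) (Fin 2) ℂ) ∧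
    ptraceA ρABloc = (2⁻¹ : ℂ) • (1 : Matrix (Fin 2) (Fin 2) ℂ) := by
  rw [LocalEnvAux.rhoAB_eq]
  refine ⟨?_, LocalEnvAux.negativity_RAB, ?_, ?_⟩
  · simp [Matrix.trace, Matrix.diag, Matrix.mul_apply, LocalEnvAux.RAB, LocalEnvAux.gv,
      Fintype.sum_prod_type, Fin.sum_univ_two, Prod.ext_iff]
    norm_num [Complex.I_mul_I]
    ring_nf
    norm_num [Complex.I_sq]
  · ext i j
    fin_cases i <;> fin_cases j <;>
      simp [ptraceC, LocalEnvAux.RAB, LocalEnvAux.gv, Fin.sum_univ_two, Matrix.one_apply,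
        Prod.ext_iff] <;>
      try norm_num [Complex.I_mul_I] <;>
      try (ring_nf; norm_num [Complex.I_sq])
  · ext i j
    fin_cases i <;> fin_cases j <;>
      simp [ptraceA, LocalEnvAux.RAB, LocalEnvAux.gv, Fin.sum_univ_two, Matrix.one_apply,
        Prod.ext_iff] <;>
      try norm_num [Complex.I_mul_I] <;>
      try (ring_nf; norm_num [Complex.I_sq])

end
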